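/- Let D ≥ 2 and n ≥ 2 be integers, Γ : Fin n → Fin n → ℕ an adjacency matrix (symmetric with zero diagonal), and let V₁, V₂ be disjoint nonempty subsets with V₁ ∪ V₂ = Fin n. Assume that for every i ∈ V₁ the total edge weight ∑_{j∈V₂} Γ(i,j) is coprime to D, and for every j ∈ V₂ the weight ∑_{i∈V₁} Γ(i,j) is coprime to D. Call c : Fin n → ZMod D a codeword if ∑_{i∈V₁} c(i) = 0 and ∑_{j∈V₂} c(j) = 0 in ZMod D. Then for all codewords c and c', every site i ∈ Fin n, and every pair (μ,ν) ∈ ZMod D × ZMod D with (μ,ν) ≠ (0,0), the one-site Pauli matrix element between the corresponding graph basis vectors vanishes: ∑_{k : Fin n → ZMod D} conj(v_{c'}(k)) · exp((2πi/D)·(ν·(k(i)+μ)).val) · v_c(k + μ·δ_i) = 0. (Partition theorem: the span of the D^{n−2} codeword graph basis states is a nondegenerate additive graph code of distance 2, saturating the quantum Singleton bound.) -/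

import Mathlib

/-- The (unnormalized) graph basis vector `v_c` of the multigraph with adjacency
matrix `Γ`, evaluated at the computational basis state `k`. -/
noncomputable def graphBasisVec (D n : ℕ) (Γ : Fin n → Fin n → ℕ) (c : Fin n → ZMod D)
    (k : Fin n → ZMod D) : ℂ :=
  Complex.exp ((2 * (Real.pi : ℂ) * Complex.I / (D : ℂ)) *
    ((∑ p ∈ Finset.univ.filter (fun p : Fin n × Fin n => p.1 < p.2),
        (Γ p.1 p.2 : ℂ) * ((k p.1).val : ℂ) * ((k p.2).val : ℂ)) +
      ∑ l, ((c l).val : ℂ) * ((k l).val : ℂ)))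

open Finset

/-! ### Auxiliary: the standard additive character of `ZMod D` in `ℂ`. -/

noncomputable def eD (D : ℕ) (x : ZMod D) : ℂ :=
  Complex.exp ((2 * (Real.pi : ℂ) * Complex.I / (D : ℂ)) * (x.val : ℂ))

section eD
variable {D : ℕ} [NeZero D]

lemma eD_nat (a : ℕ) :
    Complex.exp ((2 * (Real.pi : ℂ) * Complex.I / (D : ℂ)) * (a : ℂ)) = eD D (a : ZMod D) := by
  have hD : (D : ℂ) ≠ 0 := Nat.cast_ne_zero.2 (NeZero.ne D)
  have key : ∀ q r : ℕ,
      Complex.exp ((2 * (Real.pi : ℂ) * Complex.I / (D : ℂ)) * ((D * q + r : ℕ) : ℂ)) =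
      Complex.exp ((2 * (Real.pi : ℂ) * Complex.I / (D : ℂ)) * (r : ℂ)) := by
    intro q r
    push_cast
    rw [mul_add, Complex.exp_add]
    have h : (2 * (Real.pi : ℂ) * Complex.I / D) * ((D : ℂ) * (q : ℂ)) =
        ((q : ℤ) : ℂ) * (2 * Real.pi * Complex.I) := by
      push_cast; field_simp
    rw [h, Complex.exp_int_mul_two_pi_mul_I, one_mul]
  rw [eD, ZMod.val_natCast]
  conv_lhs => rw [← Nat.div_add_mod a D]
  exact key (a / D) (a % D)

lemma eD_zero : eD D 0 = 1 := by simp [eD]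

lemma eD_add (x y : ZMod D) : eD D (x + y) = eD D x * eD D y := by
  have hx : ((x.val : ℕ) : ZMod D) = x := by simp [ZMod.natCast_val, ZMod.cast_id]
  have hy : ((y.val : ℕ) : ZMod D) = y := by simp [ZMod.natCast_val, ZMod.cast_id]
  have h : x + y = ((x.val + y.val : ℕ) : ZMod D) := by push_cast [hx, hy]; ring
  rw [h, ← eD_nat, Nat.cast_add, mul_add, Complex.exp_add, eD, eD]

lemma eD_neg (x : ZMod D) : eD D (-x) = (eD D x)⁻¹ :=
  eq_inv_of_mul_eq_one_left (by rw [← eD_add, neg_add_cancel, eD_zero])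

lemma conj_eD (x : ZMod D) : (starRingEnd ℂ) (eD D x) = eD D (-x) := by
  rw [eD_neg, eD, ← Complex.exp_conj, ← Complex.exp_neg]
  congr 1
  simp only [map_mul, map_div₀, Complex.conj_I, Complex.conj_ofReal, map_natCast, map_ofNat]
  ring

lemma eD_nat_mul (m : ℕ) (x : ZMod D) : eD D ((m : ZMod D) * x) = eD D x ^ m := by
  induction m with
  | zero => simp [eD_zero]
  | succ p ih =>
      push_cast
      rw [add_mul, one_mul, eD_add, ih, pow_succ]

lemma eD_finsum {α : Type*} (s : Finset α) (f : α → ZMod D) :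
    eD D (∑ x ∈ s, f x) = ∏ x ∈ s, eD D (f x) := by
  classical
  induction s using Finset.cons_induction with
  | empty => simp [eD_zero]
  | cons a s ha ih => rw [Finset.sum_cons, Finset.prod_cons, eD_add, ih]

lemma sum_eD (a : ZMod D) (ha : a ≠ 0) : ∑ x : ZMod D, eD D (a * x) = 0 := by
  have hD : (D : ℂ) ≠ 0 := Nat.cast_ne_zero.2 (NeZero.ne D)
  have hne1 : eD D a ≠ 1 := by
    intro h
    rw [eD, Complex.exp_eq_one_iff] at h
    obtain ⟨m, hm⟩ := h
    set t : ℕ := a.val with ht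
    have h2πI : (2 * (Real.pi : ℂ) * Complex.I) ≠ 0 := by
      apply mul_ne_zero (mul_ne_zero two_ne_zero _) Complex.I_ne_zero
      exact Complex.ofReal_ne_zero.2 Real.pi_ne_zero
    have h2' : (2 * (Real.pi : ℂ) * Complex.I) * (t : ℂ) =
        (2 * (Real.pi : ℂ) * Complex.I) * ((m : ℂ) * (D : ℂ)) := by
      field_simp at hm
      linear_combination (2 * (Real.pi : ℂ) * Complex.I) * hm
    have h2'' := mul_left_cancel₀ h2πI h2'
    have h3 : (t : ℤ) = m * D := by exact_mod_cast h2''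
    have hdvd : (D : ℤ) ∣ (t : ℤ) := ⟨m, by linarith [h3]⟩
    have hdvd' : D ∣ t := Int.ofNat_dvd.mp (by exact_mod_cast hdvd)
    have := Nat.eq_zero_of_dvd_of_lt hdvd' (ZMod.val_lt a)
    exact ha ((ZMod.val_eq_zero a).mp this)
  have hkey : ∑ x : ZMod D, eD D (a * x) = ∑ j ∈ Finset.range D, eD D a ^ j := by
    apply Finset.sum_nbij' (i := fun x : ZMod D => x.val) (j := fun j : ℕ => (j : ZMod D))
    · intro x _; exact Finset.mem_range.2 (ZMod.val_lt x)
    · intro j _; exact Finset.mem_univ _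
    · intro x _; simp [ZMod.natCast_val, ZMod.cast_id]
    · intro j hj; simp [ZMod.val_natCast, Nat.mod_eq_of_lt (Finset.mem_range.1 hj)]
    · intro x _
      rw [← eD_nat_mul]
      congr 1
      rw [mul_comm]
      congr 1
      simp [ZMod.natCast_val, ZMod.cast_id]
  rw [hkey, geom_sum_eq hne1]
  have hpow : eD D a ^ D = 1 := by
    rw [← eD_nat_mul, ZMod.natCast_self, zero_mul, eD_zero]
  simp [hpow]

end eD

section quad
variable {D n : ℕ} [NeZero D]

/-- The quadratic part of the exponent, as an element of `ZMod D`. -/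
def qf (Γ : Fin n → Fin n → ℕ) (k : Fin n → ZMod D) : ZMod D :=
  ∑ p ∈ Finset.univ.filter (fun p : Fin n × Fin n => p.1 < p.2),
    (Γ p.1 p.2 : ZMod D) * k p.1 * k p.2

/-- The linear part of the exponent, as an element of `ZMod D`. -/
def sf (c k : Fin n → ZMod D) : ZMod D := ∑ l, c l * k l

lemma pair_nested (f : Fin n × Fin n → ZMod D) :
    ∑ p ∈ Finset.univ.filter (fun p : Fin n × Fin n => p.1 < p.2), f p =
    ∑ l : Fin n, ∑ m : Fin n, if l < m then f (l, m) else 0 := by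
  rw [Finset.sum_filter, Fintype.sum_prod_type]

lemma sf_shift (c : Fin n → ZMod D) (i : Fin n) (μ : ZMod D) (k : Fin n → ZMod D) :
    sf c (k + fun m => if m = i then μ else 0) = sf c k + c i * μ := by
  rw [sf, sf]
  simp only [Pi.add_apply, mul_add]
  rw [Finset.sum_add_distrib]
  congr 1
  have h : ∀ l : Fin n, c l * (if l = i then μ else 0) = if l = i then c i * μ else 0 := by
    intro l
    by_cases hl : l = i
    · subst hl; simp
    · simp [hl]
  rw [Finset.sum_congr rfl fun l _ => h l, Finset.sum_ite_eq' Finset.univ i]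
  simp

lemma qf_shift (Γ : Fin n → Fin n → ℕ) (hsymm : ∀ l m, Γ l m = Γ m l)
    (hdiag : ∀ l, Γ l l = 0) (i : Fin n) (μ : ZMod D) (k : Fin n → ZMod D) :
    qf Γ (k + fun m => if m = i then μ else 0) =
      qf Γ k + μ * ∑ l, (Γ l i : ZMod D) * k l := by
  classical
  rw [qf, pair_nested, qf, pair_nested]
  have expand : ∀ l m : Fin n,
      (if l < m then (Γ l m : ZMod D) * (k + fun m => if m = i then μ else 0) l *
          (k + fun m => if m = i then μ else 0) m else 0) =
      (if l < m then (Γ l m : ZMod D) * k l * k m else 0) +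
      ((if l < m then (Γ l m : ZMod D) * k l * (if m = i then μ else 0) else 0) +
       ((if l < m then (Γ l m : ZMod D) * (if l = i then μ else 0) * k m else 0) +
        (if l < m then (Γ l m : ZMod D) * (if l = i then μ else 0) * (if m = i then μ else 0) else 0))) := by
    intro l m
    by_cases hlm : l < m
    · simp only [if_pos hlm, Pi.add_apply]; ring
    · simp [hlm]
  simp only [expand, Finset.sum_add_distrib]
  have T4 : (∑ l : Fin n, ∑ m : Fin n, if l < m then
      (Γ l m : ZMod D) * (if l = i then μ else 0) * (if m = i then μ else 0) else 0) = 0 := by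
    apply Finset.sum_eq_zero; intro l _
    apply Finset.sum_eq_zero; intro m _
    by_cases hlm : l < m
    · by_cases hl : l = i
      · have hm : m ≠ i := fun hm => absurd hlm (by rw [hl, hm]; exact lt_irrefl i)
        simp [hm]
      · simp [hl]
    · simp [hlm]
  have T2 : (∑ l : Fin n, ∑ m : Fin n, if l < m then
      (Γ l m : ZMod D) * k l * (if m = i then μ else 0) else 0) =
      ∑ l : Fin n, if l < i then (Γ l i : ZMod D) * k l * μ else 0 := by
    apply Finset.sum_congr rfl; intro l _
    have h : ∀ m : Fin n, (if l < m then (Γ l m : ZMod D) * k l * (if m = i then μ else 0) else 0) =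
        if m = i then (if l < i then (Γ l i : ZMod D) * k l * μ else 0) else 0 := by
      intro m
      by_cases hm : m = i
      · subst hm
        by_cases hli : l < m
        · simp [hli]
        · simp [hli]
      · simp [hm]
    rw [Finset.sum_congr rfl fun m _ => h m, Finset.sum_ite_eq' Finset.univ i]
    simp
  have T3 : (∑ l : Fin n, ∑ m : Fin n, if l < m then
      (Γ l m : ZMod D) * (if l = i then μ else 0) * k m else 0) =
      ∑ m : Fin n, if i < m then (Γ m i : ZMod D) * k m * μ else 0 := by
    have inner : ∀ l : Fin n, (∑ m : Fin n, if l < m then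
        (Γ l m : ZMod D) * (if l = i then μ else 0) * k m else 0) =
        if l = i then (∑ m : Fin n, if i < m then (Γ m i : ZMod D) * k m * μ else 0) else 0 := by
      intro l
      by_cases hl : l = i
      · subst hl
        simp only [eq_self_iff_true, if_true]
        apply Finset.sum_congr rfl; intro m _
        by_cases him : l < m
        · rw [if_pos him, if_pos him]
          have hg : (Γ l m : ZMod D) = (Γ m l : ZMod D) := by rw [hsymm l m]
          rw [hg]; ring
        · rw [if_neg him, if_neg him]
      · simp [hl]
    rw [Finset.sum_congr rfl fun l _ => inner l, Finset.sum_ite_eq' Finset.univ i]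
    simp
  rw [T2, T3, T4, add_zero]
  have comb : (∑ l : Fin n, if l < i then (Γ l i : ZMod D) * k l * μ else 0) +
      (∑ m : Fin n, if i < m then (Γ m i : ZMod D) * k m * μ else 0) =
      μ * ∑ l : Fin n, (Γ l i : ZMod D) * k l := by
    rw [← Finset.sum_add_distrib, Finset.mul_sum]
    apply Finset.sum_congr rfl; intro l _
    rcases lt_trichotomy l i with hlt | heq | hgt
    · rw [if_pos hlt, if_neg (asymm hlt)]; ring
    · subst heq
      simp [hdiag]
    · rw [if_neg (asymm hgt), if_pos hgt]; ring
  rw [comb]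

lemma graphBasisVec_eq (Γ : Fin n → Fin n → ℕ) (c k : Fin n → ZMod D) :
    graphBasisVec D n Γ c k = eD D (qf Γ k + sf c k) := by
  rw [graphBasisVec]
  have h1 : (∑ p ∈ Finset.univ.filter (fun p : Fin n × Fin n => p.1 < p.2),
        (Γ p.1 p.2 : ℂ) * ((k p.1).val : ℂ) * ((k p.2).val : ℂ)) +
      ∑ l, ((c l).val : ℂ) * ((k l).val : ℂ) =
      (((∑ p ∈ Finset.univ.filter (fun p : Fin n × Fin n => p.1 < p.2),
        Γ p.1 p.2 * (k p.1).val * (k p.2).val) +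
      ∑ l, (c l).val * (k l).val : ℕ) : ℂ) := by push_cast; ring
  rw [h1, eD_nat]
  congr 1
  rw [qf, sf]
  push_cast [ZMod.natCast_val, ZMod.cast_id]
  ring

end quad

/-- Partition theorem: under the coprimality conditions on the bipartition `V₁, V₂`,
for any two codewords `c, c'` and any nontrivial one-site Pauli `X_i^μ Z_i^ν`, the
matrix element between the graph basis vectors `v_{c'}` and `X_i^μ Z_i^ν v_c`
vanishes, so the codeword graph basis states span a nondegenerate distance-2 code. -/
theorem partition_theorem (D n : ℕ) [NeZero D] (hD : 2 ≤ D) (hn : 2 ≤ n)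
    (Γ : Fin n → Fin n → ℕ) (hsymm : ∀ l m, Γ l m = Γ m l) (hdiag : ∀ l, Γ l l = 0)
    (V₁ V₂ : Finset (Fin n)) (hdisj : Disjoint V₁ V₂)
    (h1 : V₁.Nonempty) (h2 : V₂.Nonempty) (hunion : V₁ ∪ V₂ = Finset.univ)
    (hcop1 : ∀ i ∈ V₁, Nat.Coprime (∑ j ∈ V₂, Γ i j) D)
    (hcop2 : ∀ j ∈ V₂, Nat.Coprime (∑ i ∈ V₁, Γ i j) D)
    (c c' : Fin n → ZMod D)
    (hc1 : ∑ i ∈ V₁, c i = 0) (hc2 : ∑ j ∈ V₂, c j = 0)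
    (hc'1 : ∑ i ∈ V₁, c' i = 0) (hc'2 : ∑ j ∈ V₂, c' j = 0)
    (i : Fin n) (μ ν : ZMod D) (hμν : (μ, ν) ≠ ((0 : ZMod D), (0 : ZMod D))) :
    ∑ k : Fin n → ZMod D,
      (starRingEnd ℂ) (graphBasisVec D n Γ c' k) *
        Complex.exp ((2 * (Real.pi : ℂ) * Complex.I / (D : ℂ)) *
          (((ν * (k i + μ)).val : ℂ))) *
        graphBasisVec D n Γ c (k + fun m => if m = i then μ else 0) = 0 := by
  classical
  set af : Fin n → ZMod D :=
    fun l => (if l = i then ν else 0) + μ * (Γ l i : ZMod D) + c l - c' l with haf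
  -- Step 1: some coefficient is nonzero.
  have hex : ∃ l, af l ≠ 0 := by
    by_contra hcon
    push_neg at hcon
    have hsum : ∀ S : Finset (Fin n), ∑ l ∈ S, af l = 0 :=
      fun S => Finset.sum_eq_zero fun l _ => hcon l
    have expand : ∀ S : Finset (Fin n), ∑ l ∈ S, af l =
        (∑ l ∈ S, if l = i then ν else 0) + μ * (∑ l ∈ S, (Γ l i : ZMod D)) +
        (∑ l ∈ S, c l) - (∑ l ∈ S, c' l) := by
      intro S
      simp only [haf]
      rw [Finset.sum_sub_distrib, Finset.sum_add_distrib, Finset.sum_add_distrib,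
        Finset.mul_sum]
    have hiu : i ∈ V₁ ∪ V₂ := hunion ▸ Finset.mem_univ i
    rcases Finset.mem_union.1 hiu with hi | hi
    · -- i ∈ V₁ : sum over V₂ kills μ, then sum over V₁ kills ν
      have hne : ∀ l ∈ V₂, l ≠ i :=
        fun l hl he => Finset.disjoint_left.1 hdisj hi (he ▸ hl)
      have h0 : (∑ l ∈ V₂, if l = i then ν else 0) = 0 :=
        Finset.sum_eq_zero fun l hl => if_neg (hne l hl)
      have e2 : μ * (∑ l ∈ V₂, (Γ l i : ZMod D)) = 0 := by
        have h := hsum V₂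
        rw [expand V₂, h0, hc2, hc'2] at h
        simpa using h
      have hW : IsUnit ((∑ l ∈ V₂, Γ l i : ℕ) : ZMod D) := by
        rw [ZMod.isUnit_iff_coprime]
        have hs : (∑ l ∈ V₂, Γ l i) = ∑ j ∈ V₂, Γ i j :=
          Finset.sum_congr rfl fun j _ => hsymm j i
        rw [hs]; exact hcop1 i hi
      have hμ : μ = 0 := by
        have hcast : ((∑ l ∈ V₂, Γ l i : ℕ) : ZMod D) = ∑ l ∈ V₂, (Γ l i : ZMod D) :=
          Nat.cast_sum _ _
        rw [hcast] at hW
        exact (IsUnit.mul_left_eq_zero hW).mp e2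
      have hν : ν = 0 := by
        have h := hsum V₁
        rw [expand V₁, hc1, hc'1, hμ] at h
        have hν' : (∑ l ∈ V₁, if l = i then ν else 0) = ν := by
          rw [Finset.sum_ite_eq' V₁ i (fun _ => ν), if_pos hi]
        rw [hν'] at h
        simpa using h
      exact hμν (by rw [hμ, hν])
    · -- i ∈ V₂
      have hne : ∀ l ∈ V₁, l ≠ i :=
        fun l hl he => Finset.disjoint_left.1 hdisj hl (he ▸ hi)
      have h0 : (∑ l ∈ V₁, if l = i then ν else 0) = 0 :=
        Finset.sum_eq_zero fun l hl => if_neg (hne l hl)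
      have e2 : μ * (∑ l ∈ V₁, (Γ l i : ZMod D)) = 0 := by
        have h := hsum V₁
        rw [expand V₁, h0, hc1, hc'1] at h
        simpa using h
      have hW : IsUnit ((∑ l ∈ V₁, Γ l i : ℕ) : ZMod D) := by
        rw [ZMod.isUnit_iff_coprime]
        exact hcop2 i hi
      have hμ : μ = 0 := by
        have hcast : ((∑ l ∈ V₁, Γ l i : ℕ) : ZMod D) = ∑ l ∈ V₁, (Γ l i : ZMod D) :=
          Nat.cast_sum _ _
        rw [hcast] at hW
        exact (IsUnit.mul_left_eq_zero hW).mp e2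
      have hν : ν = 0 := by
        have h := hsum V₂
        rw [expand V₂, hc2, hc'2, hμ] at h
        have hν' : (∑ l ∈ V₂, if l = i then ν else 0) = ν := by
          rw [Finset.sum_ite_eq' V₂ i (fun _ => ν), if_pos hi]
        rw [hν'] at h
        simpa using h
      exact hμν (by rw [hμ, hν])
  obtain ⟨l₀, hl₀⟩ := hex
  -- Step 2: pointwise rewriting of the summand.
  have key : ∀ k : Fin n → ZMod D,
      (starRingEnd ℂ) (graphBasisVec D n Γ c' k) *
        Complex.exp ((2 * (Real.pi : ℂ) * Complex.I / (D : ℂ)) *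
          (((ν * (k i + μ)).val : ℂ))) *
        graphBasisVec D n Γ c (k + fun m => if m = i then μ else 0) =
      eD D (ν * μ + c i * μ) * ∏ l, eD D (af l * k l) := by
    intro k
    have hmid : Complex.exp ((2 * (Real.pi : ℂ) * Complex.I / (D : ℂ)) *
        (((ν * (k i + μ)).val : ℂ))) = eD D (ν * (k i + μ)) := rfl
    rw [graphBasisVec_eq Γ c' k, graphBasisVec_eq Γ c _, hmid, conj_eD,
      ← eD_add, ← eD_add, ← eD_finsum, ← eD_add]
    congr 1
    rw [qf_shift Γ hsymm hdiag i μ k, sf_shift]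
    have hR : ∑ l, af l * k l =
        (∑ l, (if l = i then ν else 0) * k l) + μ * (∑ l, (Γ l i : ZMod D) * k l) +
        sf c k - sf c' k := by
      simp only [haf, add_mul, sub_mul, Finset.sum_add_distrib, Finset.sum_sub_distrib, sf]
      rw [Finset.mul_sum]
      simp only [mul_assoc]
    have hite : (∑ l, (if l = i then ν else 0) * k l) = ν * k i := by
      have h : ∀ l : Fin n, (if l = i then ν else 0) * k l =
          if l = i then ν * k i else 0 := by
        intro l
        by_cases hl : l = i
        · subst hl; simp
        · simp [hl]
      rw [Finset.sum_congr rfl fun l _ => h l, Finset.sum_ite_eq' Finset.univ i]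
      simp
    rw [hR, hite]
    ring
  rw [Finset.sum_congr rfl fun k _ => key k, ← Finset.mul_sum,
    ← Fintype.prod_sum (f := fun (l : Fin n) (x : ZMod D) => eD D (af l * x))]
  rw [Finset.prod_eq_zero (Finset.mem_univ l₀) (sum_eD (af l₀) hl₀), mul_zero]
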